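/- Let X and Y be Banach spaces with T ∈ B(X) and S ∈ B(Y) equivalent after extension, and suppose S is compact. If X is reflexive, then Y is reflexive. -/

import Mathlib

open ContinuousLinearMap

/-- A normed space is reflexive if the canonical inclusion into its double dual is
surjective. -/
def IsReflexiveSpace (X : Type*) [NormedAddCommGroup X] [NormedSpace ℂ X] : Prop :=
  Function.Surjective (NormedSpace.inclusionInDoubleDual ℂ X)

namespace ReflexAux

open NormedSpace

variable {E F : Type*} [NormedAddCommGroup E] [NormedSpace ℂ E]
  [NormedAddCommGroup F] [NormedSpace ℂ F]

/-- Transpose of a continuous linear map, as a map between duals. -/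
noncomputable def tr (f : E →L[ℂ] F) : StrongDual ℂ F →L[ℂ] StrongDual ℂ E :=
  (ContinuousLinearMap.compL ℂ E F ℂ).flip f

@[simp] lemma tr_apply (f : E →L[ℂ] F) (g : StrongDual ℂ F) (x : E) : tr f g x = g (f x) := rfl

/-- A retract of a reflexive space is reflexive. -/
lemma reflexive_of_retract (P : E →L[ℂ] F) (Q : F →L[ℂ] E) (h : ∀ x, Q (P x) = x)
    (hF : IsReflexiveSpace F) : IsReflexiveSpace E := by
  intro u
  obtain ⟨w, hw⟩ := hF (u.comp (tr P))
  refine ⟨Q w, ?_⟩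
  ext g
  have h2 : tr P (tr Q g) = g := by ext x; simp [h x]
  have h3 := congrFun (congrArg (fun (v : StrongDual ℂ (StrongDual ℂ F)) => (v : StrongDual ℂ F → ℂ)) hw) (tr Q g)
  simpa [h2] using h3

lemma reflexive_prod (hE : IsReflexiveSpace E) (hF : IsReflexiveSpace F) :
    IsReflexiveSpace (E × F) := by
  intro u
  obtain ⟨x, hx⟩ := hE (u.comp (tr (ContinuousLinearMap.fst ℂ E F)))
  obtain ⟨y, hy⟩ := hF (u.comp (tr (ContinuousLinearMap.snd ℂ E F)))
  refine ⟨(x, y), ?_⟩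
  ext g
  have hx' := congrFun (congrArg (fun (v : StrongDual ℂ (StrongDual ℂ E)) => (v : StrongDual ℂ E → ℂ)) hx)
    (tr (ContinuousLinearMap.inl ℂ E F) g)
  have hy' := congrFun (congrArg (fun (v : StrongDual ℂ (StrongDual ℂ F)) => (v : StrongDual ℂ F → ℂ)) hy)
    (tr (ContinuousLinearMap.inr ℂ E F) g)
  have key : tr (ContinuousLinearMap.fst ℂ E F) (tr (ContinuousLinearMap.inl ℂ E F) g)
      + tr (ContinuousLinearMap.snd ℂ E F) (tr (ContinuousLinearMap.inr ℂ E F) g) = g := by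
    refine ContinuousLinearMap.ext fun z => ?_
    show g (z.1, 0) + g (0, z.2) = g z
    rw [← map_add]
    simp
  have : g (x, y) = u g := by
    calc g (x, y) = g (x, 0) + g (0, y) := by rw [← map_add]; simp
    _ = u (tr (ContinuousLinearMap.fst ℂ E F) (tr (ContinuousLinearMap.inl ℂ E F) g))
        + u (tr (ContinuousLinearMap.snd ℂ E F) (tr (ContinuousLinearMap.inr ℂ E F) g)) := by
        simp only [ContinuousLinearMap.comp_apply, NormedSpace.dual_def, tr_apply,
          inl_apply, inr_apply] at hx' hy'
        rw [hx', hy']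
    _ = u g := by rw [← map_add, key]
  simpa using this

lemma reflexive_of_findim [FiniteDimensional ℂ E] :
    Function.Surjective (NormedSpace.inclusionInDoubleDual ℂ E) := by
  have hinj : Function.Injective (inclusionInDoubleDual ℂ E) := by
    intro a b hab
    refine sub_eq_zero.mp (NormedSpace.eq_zero_of_forall_dual_eq_zero ℂ fun f => ?_)
    have := congrFun (congrArg (fun (v : StrongDual ℂ (StrongDual ℂ E)) => (v : StrongDual ℂ E → ℂ)) hab) f
    simp only [dual_def] at this
    simp [map_sub, this]
  have e1 : FiniteDimensional ℂ (StrongDual ℂ E) :=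
    (LinearMap.toContinuousLinearMap (𝕜 := ℂ) (E := E) (F' := ℂ)).finiteDimensional
  have hr1 : Module.finrank ℂ (StrongDual ℂ E) = Module.finrank ℂ E := by
    rw [← (LinearMap.toContinuousLinearMap (𝕜 := ℂ) (E := E) (F' := ℂ)).finrank_eq]
    exact Subspace.dual_finrank_eq
  have e2 : FiniteDimensional ℂ (StrongDual ℂ (StrongDual ℂ E)) :=
    (LinearMap.toContinuousLinearMap (𝕜 := ℂ) (E := StrongDual ℂ E) (F' := ℂ)).finiteDimensional
  have hr2 : Module.finrank ℂ (StrongDual ℂ (StrongDual ℂ E)) = Module.finrank ℂ (StrongDual ℂ E) := by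
    rw [← (LinearMap.toContinuousLinearMap (𝕜 := ℂ) (E := StrongDual ℂ E) (F' := ℂ)).finrank_eq]
    exact Subspace.dual_finrank_eq
  have := (LinearMap.injective_iff_surjective_of_finrank_eq_finrank (K := ℂ) (V := E) (V₂ := StrongDual ℂ (StrongDual ℂ E))
    (by rw [hr2, hr1] : Module.finrank ℂ E = Module.finrank ℂ (StrongDual ℂ (StrongDual ℂ E)))
    (f := (inclusionInDoubleDual ℂ E : E →L[ℂ] StrongDual ℂ (StrongDual ℂ E)).toLinearMap)).mp (by exact hinj)
  exact this

/-- A `ℂ`-linear functional whose real part is bounded above on a submodule vanishes there. -/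
lemma vanish_on_submodule {f : E →L[ℂ] ℂ} {c : ℝ} {Z : Submodule ℂ E}
    (h : ∀ a ∈ Z, (f a).re < c) {a : E} (ha : a ∈ Z) : f a = 0 := by
  by_contra hfa
  have hns : 0 < Complex.normSq (f a) := Complex.normSq_pos.mpr hfa
  set s : ℝ := (|c| + 1) / Complex.normSq (f a) with hs
  have := h (((s : ℂ) * (starRingEnd ℂ) (f a)) • a) (Z.smul_mem _ ha)
  rw [map_smul] at this
  have hcalc : (((s : ℂ) * (starRingEnd ℂ) (f a)) • f a).re = |c| + 1 := by
    have : ((s : ℂ) * (starRingEnd ℂ) (f a)) • f a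
        = ((s * Complex.normSq (f a) : ℝ) : ℂ) := by
      rw [smul_eq_mul, mul_assoc, mul_comm ((starRingEnd ℂ) (f a)), Complex.mul_conj]
      push_cast
      ring
    rw [this, Complex.ofReal_re, hs, div_mul_cancel₀ _ (ne_of_gt hns)]
  rw [hcalc] at this
  have : c ≤ |c| := le_abs_self c
  linarith

/-- A closed subspace of a reflexive space is reflexive. -/
lemma reflexive_subspace (hE : Function.Surjective (NormedSpace.inclusionInDoubleDual ℂ E))
    (Z : Submodule ℂ E) (hZ : IsClosed (Z : Set E)) :
    Function.Surjective (NormedSpace.inclusionInDoubleDual ℂ ↥Z) := by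
  intro u
  obtain ⟨x, hx⟩ := hE (u.comp (tr Z.subtypeL))
  have hfx : ∀ f : StrongDual ℂ E, f x = u (tr Z.subtypeL f) :=
    fun f => congrFun (congrArg (fun (v : StrongDual ℂ (StrongDual ℂ E)) => (v : StrongDual ℂ E → ℂ)) hx) f
  have hxZ : x ∈ Z := by
    by_contra hxZ
    have hconv : Convex ℝ (Z : Set E) := (Z.restrictScalars ℝ).convex
    obtain ⟨f, c, hfZ, hcx⟩ :=
      RCLike.geometric_hahn_banach_closed_point (𝕜 := ℂ) hconv hZ hxZ
    have hvan : ∀ a ∈ Z, f a = 0 := fun a ha => vanish_on_submodule hfZ ha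
    have h0 : tr Z.subtypeL f = 0 := by
      ext a
      simpa using hvan a a.2
    have : f x = 0 := by rw [hfx f, h0, map_zero]
    rw [this] at hcx
    have h00 : (f (0:E)).re < c := hfZ 0 Z.zero_mem
    simp at hcx h00
    linarith
  refine ⟨⟨x, hxZ⟩, ?_⟩
  ext g
  obtain ⟨G, hG, -⟩ := exists_extension_norm_eq Z g
  have h1 : tr Z.subtypeL G = g := by ext a; simpa using hG a
  have h2 := hfx G
  rw [h1] at h2
  have : g ⟨x, hxZ⟩ = u g := by
    rw [← h2, ← hG ⟨x, hxZ⟩]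
  simpa using this

/-- `id - K` is bounded below on a closed subspace intersecting `ker (id - K)` trivially. -/
lemma bounded_below_of_compact {Y : Type*} [NormedAddCommGroup Y] [NormedSpace ℂ Y]
    {K : Y →L[ℂ] Y} (hK : IsCompactOperator K)
    (q : Submodule ℂ Y) (hq : IsClosed (q : Set Y))
    (hdisj : ∀ y ∈ q, y = K y → y = 0) :
    ∃ c : ℝ, 0 < c ∧ ∀ y ∈ q, c * ‖y‖ ≤ ‖y - K y‖ := by
  by_contra hc
  push_neg at hc
  choose y hyq hy using fun n : ℕ => hc (1 / (n + 1)) (by positivity)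
  have hyne : ∀ n, y n ≠ 0 := by
    intro n h0
    have := hy n
    rw [h0] at this
    simp at this
  set z : ℕ → Y := fun n => (‖y n‖ : ℂ)⁻¹ • y n with hz
  have hznorm : ∀ n, ‖z n‖ = 1 := by
    intro n
    rw [hz]
    simp only [norm_smul, norm_inv, Complex.norm_real, norm_norm]
    rw [inv_mul_cancel₀ (norm_ne_zero_iff.mpr (hyne n))]
  have hzq : ∀ n, z n ∈ q := fun n => q.smul_mem _ (hyq n)
  have hzb : ∀ n, ‖z n - K (z n)‖ < 1 / (n + 1) := by
    intro n
    have h1 : z n - K (z n) = (‖y n‖ : ℂ)⁻¹ • (y n - K (y n)) := by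
      rw [hz]; simp [smul_sub, map_smul]
    rw [h1, norm_smul]
    simp only [norm_inv, Complex.norm_real, norm_norm]
    calc ‖y n‖⁻¹ * ‖y n - K (y n)‖ < ‖y n‖⁻¹ * (1 / (n + 1) * ‖y n‖) := by
          exact mul_lt_mul_of_pos_left (hy n)
            (inv_pos.mpr (norm_pos_iff.mpr (hyne n)))
      _ = 1 / (n + 1) := by
          rw [mul_comm (1 / ((n : ℝ) + 1)), ← mul_assoc,
            inv_mul_cancel₀ (norm_ne_zero_iff.mpr (hyne n)), one_mul]
  have hzb0 : Filter.Tendsto (fun n => z n - K (z n)) Filter.atTop (nhds 0) :=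
    squeeze_zero_norm (fun n => (hzb n).le) tendsto_one_div_add_atTop_nhds_zero_nat
  obtain ⟨C, hCc, hCsub⟩ := hK.image_closedBall_subset_compact (𝕜₁ := ℂ) (f := (K : Y →ₗ[ℂ] Y)) 1
  have hKz : ∀ n, K (z n) ∈ C := fun n =>
    hCsub ⟨z n, by simp [Metric.mem_closedBall, (hznorm n).le, dist_zero_right], rfl⟩
  obtain ⟨w, hwC, φ, hφ, hφtend⟩ := hCc.tendsto_subseq hKz
  have hzphi : Filter.Tendsto (fun n => z (φ n)) Filter.atTop (nhds w) := by
    have h1 : Filter.Tendsto (fun n => z (φ n) - K (z (φ n))) Filter.atTop (nhds 0) :=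
      hzb0.comp hφ.tendsto_atTop
    have := h1.add hφtend
    simpa using this
  have hwq : w ∈ q := hq.mem_of_tendsto hzphi (Filter.Eventually.of_forall fun n => hzq (φ n))
  have hwnorm : ‖w‖ = 1 := by
    have h1 : Filter.Tendsto (fun n => ‖z (φ n)‖) Filter.atTop (nhds ‖w‖) :=
      (continuous_norm.tendsto w).comp hzphi
    have h2 : Filter.Tendsto (fun _ : ℕ => (1 : ℝ)) Filter.atTop (nhds 1) := tendsto_const_nhds
    exact tendsto_nhds_unique (by simpa [hznorm] using h1) h2
  have hwK : w = K w := by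
    have h1 : Filter.Tendsto (fun n => z (φ n) - K (z (φ n))) Filter.atTop (nhds (w - K w)) :=
      hzphi.sub ((K.continuous.tendsto w).comp hzphi)
    have h2 : Filter.Tendsto (fun n => z (φ n) - K (z (φ n))) Filter.atTop (nhds 0) :=
      hzb0.comp hφ.tendsto_atTop
    have := tendsto_nhds_unique h1 h2
    exact sub_eq_zero.mp this
  have := hdisj w hwq hwK
  rw [this] at hwnorm
  simp at hwnorm

lemma findim_fixed_space {Y : Type*} [NormedAddCommGroup Y] [NormedSpace ℂ Y]
    {K : Y →L[ℂ] Y} (hK : IsCompactOperator K) :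
    FiniteDimensional ℂ ↥(LinearMap.ker ((ContinuousLinearMap.id ℂ Y - K : Y →L[ℂ] Y) : Y →ₗ[ℂ] Y)) := by
  set N := LinearMap.ker ((ContinuousLinearMap.id ℂ Y - K : Y →L[ℂ] Y) : Y →ₗ[ℂ] Y) with hN
  have hmem : ∀ y : Y, y ∈ N ↔ y = K y := by
    intro y
    rw [hN, LinearMap.mem_ker]
    constructor
    · intro h
      have : y - K y = 0 := h
      exact sub_eq_zero.mp this
    · intro h
      show y - K y = 0
      rw [← h, sub_self]
  obtain ⟨C, hCc, hCsub⟩ := hK.image_closedBall_subset_compact (𝕜₁ := ℂ) (f := (K : Y →ₗ[ℂ] Y)) 1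
  have hNclosed : IsClosed (N : Set Y) := ContinuousLinearMap.isClosed_ker (ContinuousLinearMap.id ℂ Y - K)
  have hScomp : IsCompact ((N : Set Y) ∩ Metric.closedBall 0 1) := by
    refine hCc.of_isClosed_subset (hNclosed.inter Metric.isClosed_closedBall) ?_
    rintro y ⟨hyN, hyb⟩
    have : y = K y := (hmem y).mp hyN
    rw [this]
    exact hCsub ⟨y, hyb, rfl⟩
  have hball : IsCompact (Metric.closedBall (0 : ↥N) 1) := by
    rw [Topology.IsEmbedding.subtypeVal.isCompact_iff]
    convert hScomp using 1
    ext y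
    constructor
    · rintro ⟨⟨a, ha⟩, hab, rfl⟩
      refine ⟨ha, ?_⟩
      simpa [Metric.mem_closedBall, dist_eq_norm] using hab
    · rintro ⟨hyN, hyb⟩
      exact ⟨⟨y, hyN⟩, by simpa [Metric.mem_closedBall, dist_eq_norm] using hyb, rfl⟩
  exact FiniteDimensional.of_isCompact_closedBall₀ ℂ one_pos hball

end ReflexAux

set_option maxHeartbeats 1000000 in
/-- If `T ∈ B(X)` is equivalent after extension to a compact `S ∈ B(Y)`
and `X` is reflexive, then `Y` is reflexive. -/
theorem reflexive_of_eae_compact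
    (X Y : Type*) [NormedAddCommGroup X] [NormedSpace ℂ X] [CompleteSpace X]
    [NormedAddCommGroup Y] [NormedSpace ℂ Y] [CompleteSpace Y]
    (T : X →L[ℂ] X) (S : Y →L[ℂ] Y) (hS : IsCompactOperator S)
    (hEAE : ∃ (E : (Y × X) ≃L[ℂ] (X × Y)) (F : (X × Y) ≃L[ℂ] (Y × X)),
      T.prodMap (ContinuousLinearMap.id ℂ Y) =
        (E : (Y × X) →L[ℂ] (X × Y)) ∘L
          (S.prodMap (ContinuousLinearMap.id ℂ X)) ∘L
            (F : (X × Y) →L[ℂ] (Y × X)))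
    (hX : IsReflexiveSpace X) :
    IsReflexiveSpace Y := by
  classical
  obtain ⟨E', F', hEF⟩ := hEAE
  set A : X →L[ℂ] Y := (ContinuousLinearMap.snd ℂ X Y) ∘L
    ((E' : (Y × X) →L[ℂ] (X × Y))) ∘L (ContinuousLinearMap.inr ℂ Y X) with hA
  set B : Y →L[ℂ] X := (ContinuousLinearMap.snd ℂ Y X) ∘L
    ((F' : (X × Y) →L[ℂ] (Y × X))) ∘L (ContinuousLinearMap.inr ℂ X Y) with hB
  set B' : Y →L[ℂ] Y := (ContinuousLinearMap.fst ℂ Y X) ∘L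
    ((F' : (X × Y) →L[ℂ] (Y × X))) ∘L (ContinuousLinearMap.inr ℂ X Y) with hB'
  set A' : Y →L[ℂ] Y := (ContinuousLinearMap.snd ℂ X Y) ∘L
    ((E' : (Y × X) →L[ℂ] (X × Y))) ∘L (ContinuousLinearMap.inl ℂ Y X) with hA'
  set K : Y →L[ℂ] Y := A' ∘L S ∘L B' with hKdef
  have hK : IsCompactOperator (K : Y → Y) := (hS.comp_clm B').clm_comp A'
  have hid : ∀ y : Y, K y + A (B y) = y := by
    intro y
    have h := congrArg Prod.snd (ContinuousLinearMap.ext_iff.mp hEF (0, y))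
    simp only [ContinuousLinearMap.comp_apply, ContinuousLinearMap.coe_coe,
      ContinuousLinearMap.coe_prodMap', Prod.map_apply, ContinuousLinearMap.coe_id', id_eq,
      ContinuousLinearMap.id_apply, map_zero] at h
    have hsum : K y + A (B y) = (E' ((S (B' y), 0) + (0, B y))).2 := by
      rw [map_add]
      rfl
    rw [hsum, Prod.mk_add_mk, add_zero, zero_add]
    exact h.symm
  set N := LinearMap.ker ((ContinuousLinearMap.id ℂ Y - K : Y →L[ℂ] Y) : Y →ₗ[ℂ] Y) with hN
  haveI hNfd : FiniteDimensional ℂ ↥N := ReflexAux.findim_fixed_space hK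
  have hcompl : N.ClosedComplemented := Submodule.ClosedComplemented.of_finiteDimensional N
  obtain ⟨q, e, he1, he2, he3⟩ := hcompl.exists_submodule_equiv_prod
  have hqclosed : IsClosed (q : Set Y) := by
    have hset : (q : Set Y) = (fun y => ((e y).1 : Y)) ⁻¹' {0} := by
      ext y
      simp only [Set.mem_preimage, Set.mem_singleton_iff, SetLike.mem_coe]
      constructor
      · intro hy
        have := he2 ⟨y, hy⟩
        rw [show ((⟨y, hy⟩ : ↥q) : Y) = y from rfl] at this
        rw [this]
        rfl
      · intro h0
        have hy := he3 (e y)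
        rw [e.symm_apply_apply] at hy
        rw [hy, h0, zero_add]
        exact ((e y).2).2
    rw [hset]
    exact isClosed_singleton.preimage
      (continuous_subtype_val.comp (continuous_fst.comp e.continuous))
  have hdisjq : ∀ y ∈ q, y = K y → y = 0 := by
    intro y hyq hyK
    have hyN : y ∈ N := by
      rw [hN, LinearMap.mem_ker]
      show y - K y = 0
      rw [← hyK, sub_self]
    have h1 := he1 ⟨y, hyN⟩
    have h2 := he2 ⟨y, hyq⟩
    rw [show ((⟨y, hyN⟩ : ↥N) : Y) = y from rfl] at h1
    rw [show ((⟨y, hyq⟩ : ↥q) : Y) = y from rfl] at h2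
    have := congrArg Prod.fst (h1.symm.trans h2)
    simpa [Subtype.ext_iff] using this
  obtain ⟨c, hc, hcb⟩ := ReflexAux.bounded_below_of_compact hK q hqclosed hdisjq
  set m' : ↥q →L[ℂ] X := B ∘L q.subtypeL with hm'
  have hbound : ∀ u : ↥q, ‖u‖ ≤ ((‖A‖ + 1) / c) * ‖m' u‖ := by
    intro u
    have h1 := hcb (u : Y) u.2
    have h2 : (u : Y) - K (u : Y) = A (B (u : Y)) := (eq_sub_of_add_eq' (hid (u : Y))).symm
    rw [h2] at h1
    have h3 : ‖A (B (u : Y))‖ ≤ ‖A‖ * ‖B (u : Y)‖ := A.le_opNorm _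
    have h4 : ‖A‖ * ‖B (u : Y)‖ ≤ (‖A‖ + 1) * ‖B (u : Y)‖ := by
      have : (0:ℝ) ≤ ‖B (u : Y)‖ := norm_nonneg _
      nlinarith
    have hnorm : ‖u‖ = ‖(u : Y)‖ := rfl
    have hm : ‖m' u‖ = ‖B (u : Y)‖ := rfl
    rw [hnorm, hm, div_mul_eq_mul_div, le_div_iff₀ hc, mul_comm]
    nlinarith
  have antilip : AntilipschitzWith (Real.toNNReal ((‖A‖ + 1) / c)) m' :=
    m'.antilipschitz_of_bound fun u => by
      rw [Real.coe_toNNReal _ (by positivity)]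
      exact hbound u
  haveI : CompleteSpace ↥q := hqclosed.completeSpace_coe
  have hZrange : IsClosed (Set.range m') := antilip.isClosed_range m'.uniformContinuous
  set Z : Submodule ℂ X := LinearMap.range (m' : ↥q →ₗ[ℂ] X) with hZ
  have hZclosed : IsClosed (Z : Set X) := by
    have : (Z : Set X) = Set.range m' := by
      ext x
      simp [hZ, LinearMap.mem_range, Set.mem_range]
    rw [this]
    exact hZrange
  haveI : CompleteSpace ↥Z := hZclosed.completeSpace_coe
  set mZ : ↥q →L[ℂ] ↥Z := m'.codRestrict Z (fun u => LinearMap.mem_range_self _ u) with hmZ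
  have hker : LinearMap.ker (mZ : ↥q →ₗ[ℂ] ↥Z) = ⊥ := by
    rw [hmZ, ContinuousLinearMap.ker_codRestrict]
    exact LinearMap.ker_eq_bot.mpr antilip.injective
  have hrange : LinearMap.range (mZ : ↥q →ₗ[ℂ] ↥Z) = ⊤ := by
    rw [LinearMap.range_eq_top]
    rintro ⟨x, hx⟩
    obtain ⟨u, hu⟩ := LinearMap.mem_range.mp hx
    exact ⟨u, Subtype.ext hu⟩
  set eqZ := ContinuousLinearEquiv.ofBijective mZ hker hrange with heqZ
  have hZrefl : IsReflexiveSpace ↥Z := ReflexAux.reflexive_subspace hX Z hZclosed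
  have hqrefl : IsReflexiveSpace ↥q :=
    ReflexAux.reflexive_of_retract (eqZ : ↥q →L[ℂ] ↥Z) (eqZ.symm : ↥Z →L[ℂ] ↥q)
      (fun u => eqZ.symm_apply_apply u) hZrefl
  have hNrefl : IsReflexiveSpace ↥N := ReflexAux.reflexive_of_findim
  have hprod : IsReflexiveSpace (↥N × ↥q) := ReflexAux.reflexive_prod hNrefl hqrefl
  exact ReflexAux.reflexive_of_retract (e : Y →L[ℂ] ↥N × ↥q) (e.symm : ↥N × ↥q →L[ℂ] Y)
    (fun y => e.symm_apply_apply y) hprod
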